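/- Let A be a gentle algebra with the partition of arrows into maximal paths and repeatable cycles as above, let h = Σ_{i ∈ Q_0} [S_i] ∈ K_0(fd A), let X be a set of representatives of Cyc(A) modulo cyclic permutation, and for each c = pβ ∈ X let M(p_c) be the string module of the cycle with its last arrow removed. Then, with suitable multiplicities a_p ∈ {0,1,2} depending only on local arrow configurations, 2h = Σ_{c ∈ X} [M(p_c)] + Σ_{p ∈ M̄P(A)} a_p [M(p)] holds in K_0(fd A); consequently, any θ ∈ K_0(proj A)_ℝ with θ(M(p_c)) = 0 for all c ∈ X and θ(M(p)) = 0 for all p ∈ M̄P(A) satisfies θ(h) = 0. -/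

import Mathlib

/-- See stmt_16: successor relation of a gentle algebra. -/
def GentleSucc {V E : Type*} (s t : E → V) (R : E → E → Prop) (a b : E) : Prop :=
  t a = s b ∧ ¬ R a b

/-- A maximal nonzero path (element of `MP(A)`), by its list of arrows. -/
def IsMaxPath {E : Type*} (Succ : E → E → Prop) (l : List E) : Prop :=
  l ≠ [] ∧ l.Chain' Succ ∧
    (∀ a ∈ l.head?, ∀ e, ¬ Succ e a) ∧ (∀ a ∈ l.getLast?, ∀ e, ¬ Succ a e)

/-- A repeatable cycle (element of `Cyc(A)`), by its list of arrows. -/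
def IsRepCycle {E : Type*} (Succ : E → E → Prop) (l : List E) : Prop :=
  l ≠ [] ∧ l.Chain' Succ ∧ ∀ a ∈ l.getLast?, ∀ b ∈ l.head?, Succ a b

/-- The multiplicity of the vertex `v` in the dimension vector `[M(p)]` of the string
module of a maximal path `p` with arrow list `l`: the number of visits of `p` to `v`. -/
def lineVisits {V E : Type*} [DecidableEq V] (s t : E → V) (l : List E) (v : V) : ℕ :=
  (l.filter fun e => s e = v).length + (l.getLast?).elim 0 fun a => if t a = v then 1 else 0

/-- The multiplicity of `v` in `[M(p_c)]`, where `p_c` is the cycle `c` (arrow list `l`)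
with its last arrow removed. -/
def cycVisits {V E : Type*} [DecidableEq V] (s : E → V) (l : List E) (v : V) : ℕ :=
  (l.filter fun e => s e = v).length

/-- Let `A = KQ/⟨X⟩` be a gentle algebra whose arrows are partitioned into the maximal
nonzero paths (`Lines` = `MP(A)`) and the repeatable cycles up to cyclic permutation
(`Circs` = a set `X` of representatives of `Cyc(A)`).  With the multiplicities
`a v ∈ {0,1,2}` given by the local arrow configuration at the vertex `v` (`a v = 0`
unless `e_v ∈ M̄P(A)`, i.e. unless `v` has at most one incoming and one outgoing arrow;
`a v = 0` for one incoming arrow `x` and one outgoing `y` with `xy ∈ X`; `a v = 2` if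
there are no arrows at `v`; `a v = 1` otherwise), the identity
`2h = Σ_{c} [M(p_c)] + Σ_{p ∈ M̄P(A)} a_p [M(p)]` holds in `K_0(fd A)`, coordinatewise at
every vertex.  Consequently any `θ` vanishing on all `[M(p_c)]` and all `[M(p)]`,
`p ∈ M̄P(A)` (in particular `θ v = 0` whenever `e_v ∈ M̄P(A)`) satisfies `θ(h) = 0`. -/
lemma aux_length_filter {E : Type*} [Fintype E] [DecidableEq E] (p : E → Prop) [DecidablePred p]
    (l : List E) :
    (l.filter (fun e => decide (p e))).length = ∑ e ∈ Finset.univ.filter p, l.count e := by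
  induction l with
  | nil => simp
  | cons x xs ih =>
    have hc : ∀ e : E, (x :: xs).count e = xs.count e + if e = x then 1 else 0 := by
      intro e
      by_cases h : e = x
      · subst h; simp [List.count_cons]
      · simp [List.count_cons, h, fun he : x = e => h he.symm, Ne.symm h]
    simp only [hc, Finset.sum_add_distrib, ← ih, List.filter_cons]
    rw [Finset.sum_ite_eq' (Finset.univ.filter p) x (fun _ => 1)]
    by_cases hx : p x <;> simp [hx]

lemma aux_chain_succ {α : Type*} {S : α → α → Prop} :
    ∀ {l : List α}, l.Chain' S → ∀ x ∈ l, (∃ y, S x y) ∨ l.getLast? = some x := by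
  intro l
  induction l with
  | nil => simp
  | cons a l ih =>
    intro hc x hx
    cases l with
    | nil =>
      simp only [List.mem_singleton] at hx; subst hx; right; simp
    | cons b l' =>
      rcases List.mem_cons.mp hx with rfl | hx'
      · exact Or.inl ⟨b, (List.isChain_cons_cons.mp hc).1⟩
      · rcases ih (List.isChain_cons_cons.mp hc).2 x hx' with h | h
        · exact Or.inl h
        · right; rw [List.getLast?_cons_cons]; exact h

theorem stmt_17 {V E : Type*} [Fintype V] [Fintype E] [DecidableEq V] [DecidableEq E]
    (s t : E → V) (R : E → E → Prop)
    (hR : ∀ a b, R a b → t a = s b)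
    (hout : ∀ v : V, (Finset.univ.filter fun e => s e = v).card ≤ 2)
    (hin : ∀ v : V, (Finset.univ.filter fun e => t e = v).card ≤ 2)
    (hgd : ∀ a b c : E, b ≠ c → t a = s b → t a = s c → (R a b ↔ ¬ R a c))
    (hge : ∀ a b c : E, b ≠ c → t b = s a → t c = s a → (R b a ↔ ¬ R c a))
    (Lines Circs : Finset (List E))
    (hLines : ∀ l ∈ Lines, IsMaxPath (GentleSucc s t R) l ∧ l.Nodup)
    (hCircs : ∀ l ∈ Circs, IsRepCycle (GentleSucc s t R) l ∧ l.Nodup)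
    (hpart : ∀ e : E, ((∑ l ∈ Lines, l.count e) + ∑ l ∈ Circs, l.count e) = 1)
    (a : V → ℕ)
    (ha0 : ∀ v : V, (2 ≤ (Finset.univ.filter fun e => s e = v).card ∨
        2 ≤ (Finset.univ.filter fun e => t e = v).card) → a v = 0)
    (ha0' : ∀ (v : V) (x y : E), t x = v → s y = v → (∀ e, t e = v → e = x) →
        (∀ e, s e = v → e = y) → R x y → a v = 0)
    (ha2 : ∀ v : V, (∀ e, s e ≠ v) → (∀ e, t e ≠ v) → a v = 2)
    (ha1 : ∀ v : V, (Finset.univ.filter fun e => s e = v).card ≤ 1 →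
        (Finset.univ.filter fun e => t e = v).card ≤ 1 →
        ((∃ e, s e = v) ∨ (∃ e, t e = v)) →
        (∀ x y : E, t x = v → s y = v → ¬ R x y) → a v = 1) :
    (∀ v : V,
      ((∑ l ∈ Lines, lineVisits s t l v) + ∑ l ∈ Circs, cycVisits s l v) + a v = 2) ∧
    (∀ θ : V → ℝ,
      (∀ l ∈ Lines, ∑ v : V, θ v * (lineVisits s t l v : ℝ) = 0) →
      (∀ l ∈ Circs, ∑ v : V, θ v * (cycVisits s l v : ℝ) = 0) →
      (∀ v : V, (Finset.univ.filter fun e => s e = v).card ≤ 1 →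
        (Finset.univ.filter fun e => t e = v).card ≤ 1 → θ v = 0) →
      ∑ v : V, θ v = 0) := by
  classical
  set D : V → Finset E :=
    fun v => Finset.univ.filter (fun x => t x = v ∧ ∀ e, ¬ GentleSucc s t R x e) with hDdef
  have hDmem0 : ∀ (v : V) (x : E), x ∈ D v ↔ t x = v ∧ ∀ e, ¬ GentleSucc s t R x e := by
    intro v x
    rw [hDdef]
    simp only [Finset.mem_filter, Finset.mem_univ, true_and]
  have hDmem : ∀ (v : V) (x : E), x ∈ D v ↔ t x = v ∧ ∀ e, s e = v → R x e := by
    intro v x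
    rw [hDmem0]
    constructor
    · rintro ⟨hxt, hd⟩
      refine ⟨hxt, fun e he => ?_⟩
      by_contra hre
      exact hd e ⟨hxt.trans he.symm, hre⟩
    · rintro ⟨hxt, hd⟩
      exact ⟨hxt, fun e hse => hse.2 (hd e (hse.1.symm.trans hxt))⟩
  have key : ∀ v : V,
      ((∑ l ∈ Lines, lineVisits s t l v) + ∑ l ∈ Circs, cycVisits s l v) + a v = 2 := by
    intro v
    have hcv : ∀ l : List E, cycVisits s l v
        = ∑ e ∈ Finset.univ.filter (fun e => s e = v), l.count e := by
      intro l
      exact aux_length_filter (fun e => s e = v) l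
    have hline : ∀ l ∈ Lines, lineVisits s t l v
        = (∑ e ∈ Finset.univ.filter (fun e => s e = v), l.count e) + ∑ x ∈ D v, l.count x := by
      intro l hl
      obtain ⟨⟨hne, hch, hhead, hlast⟩, hnd⟩ := hLines l hl
      have hg : l.getLast? = some (l.getLast hne) := List.getLast?_eq_getLast hne
      set g := l.getLast hne with hgdef
      have hgmem : g ∈ l := List.getLast_mem hne
      have hgdead : ∀ e, ¬ GentleSucc s t R g e := hlast g (Option.mem_def.mpr hg)
      have huniq : ∀ x ∈ l, (∀ e, ¬ GentleSucc s t R x e) → x = g := by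
        intro x hx hxd
        rcases aux_chain_succ hch x hx with ⟨y, hy⟩ | h
        · exact absurd hy (hxd y)
        · rw [hg] at h
          exact (Option.some_inj.mp h).symm
      have hend : lineVisits s t l v = cycVisits s l v + (if t g = v then 1 else 0) := by
        unfold lineVisits cycVisits
        rw [hg]
        rfl
      have hDsum : (∑ x ∈ D v, l.count x) = if t g = v then 1 else 0 := by
        by_cases htg : t g = v
        · rw [if_pos htg]
          have hgD : g ∈ D v := (hDmem0 v g).mpr ⟨htg, hgdead⟩
          rw [Finset.sum_eq_single_of_mem g hgD ?h0]
          · exact List.count_eq_one_of_mem hnd hgmem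
          case h0 =>
            intro x hxD hxg
            rw [List.count_eq_zero]
            intro hxl
            exact hxg (huniq x hxl ((hDmem0 v x).mp hxD).2)
        · rw [if_neg htg]
          apply Finset.sum_eq_zero
          intro x hxD
          rw [List.count_eq_zero]
          intro hxl
          obtain ⟨hxt, hxd⟩ := (hDmem0 v x).mp hxD
          exact htg ((huniq x hxl hxd) ▸ hxt)
      rw [hend, hDsum, hcv l]
    have hcirc : ∀ l ∈ Circs, cycVisits s l v
        = (∑ e ∈ Finset.univ.filter (fun e => s e = v), l.count e) + ∑ x ∈ D v, l.count x := by
      intro l hl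
      obtain ⟨⟨hne, hch, hcy⟩, hnd⟩ := hCircs l hl
      have hDsum : (∑ x ∈ D v, l.count x) = 0 := by
        apply Finset.sum_eq_zero
        intro x hxD
        rw [List.count_eq_zero]
        intro hxl
        obtain ⟨hxt, hxd⟩ := (hDmem0 v x).mp hxD
        rcases aux_chain_succ hch x hxl with ⟨y, hy⟩ | h
        · exact hxd y hy
        · have hh : l.head? = some (l.head hne) := List.head?_eq_head hne
          exact hxd (l.head hne)
            (hcy x (Option.mem_def.mpr h) (l.head hne) (Option.mem_def.mpr hh))
      rw [hDsum, hcv l, add_zero]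
    have hcount : ∀ F : Finset E,
        ((∑ l ∈ Lines, ∑ e ∈ F, l.count e) + ∑ l ∈ Circs, ∑ e ∈ F, l.count e) = F.card := by
      intro F
      rw [Finset.sum_comm, Finset.sum_comm (s := Circs), ← Finset.sum_add_distrib]
      simp [hpart]
    have hsum : (∑ l ∈ Lines, lineVisits s t l v) + ∑ l ∈ Circs, cycVisits s l v
        = (Finset.univ.filter fun e => s e = v).card + (D v).card := by
      rw [Finset.sum_congr rfl hline, Finset.sum_congr rfl hcirc,
        Finset.sum_add_distrib, Finset.sum_add_distrib]
      have h1 := hcount (Finset.univ.filter fun e => s e = v)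
      have h2 := hcount (D v)
      omega
    rw [hsum]
    -- now the local case analysis at v
    have hmo : ∀ e : E, e ∈ (Finset.univ.filter fun e => s e = v) ↔ s e = v := by
      intro e; simp
    have hmi : ∀ e : E, e ∈ (Finset.univ.filter fun e => t e = v) ↔ t e = v := by
      intro e; simp
    have hDsub : D v ⊆ (Finset.univ.filter fun e => t e = v) :=
      fun x hx => (hmi x).mpr ((hDmem v x).mp hx).1
    have hO2 : (Finset.univ.filter fun e => s e = v).card ≤ 2 := hout v
    have hI2 : (Finset.univ.filter fun e => t e = v).card ≤ 2 := hin v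
    by_cases hO : (Finset.univ.filter fun e => s e = v).card = 2
    · have ha : a v = 0 := ha0 v (Or.inl (by omega))
      have hD0 : D v = ∅ := by
        rw [Finset.eq_empty_iff_forall_notMem]
        intro x hx
        obtain ⟨hxt, hxr⟩ := (hDmem v x).mp hx
        obtain ⟨y, hy, z, hz, hyz⟩ := Finset.one_lt_card.mp
          (by omega : 1 < (Finset.univ.filter fun e => s e = v).card)
        have hsy := (hmo y).mp hy
        have hsz := (hmo z).mp hz
        exact (hgd x y z hyz (by rw [hxt, hsy]) (by rw [hxt, hsz])).mp (hxr y hsy) (hxr z hsz)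
      rw [hD0, Finset.card_empty, ha, hO]
    · by_cases hI : (Finset.univ.filter fun e => t e = v).card = 2
      · have ha : a v = 0 := ha0 v (Or.inr (by omega))
        by_cases hO0 : (Finset.univ.filter fun e => s e = v).card = 0
        · have hno : ∀ e : E, s e ≠ v := by
            intro e he
            have h := (hmo e).mpr he
            rw [Finset.card_eq_zero.mp hO0] at h
            exact absurd h (Finset.notMem_empty e)
          have hDeq : D v = (Finset.univ.filter fun e => t e = v) := by
            apply Finset.Subset.antisymm hDsub
            intro x hx
            exact (hDmem v x).mpr ⟨(hmi x).mp hx, fun e he => absurd he (hno e)⟩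
          rw [hDeq]; omega
        · have hO1' : (Finset.univ.filter fun e => s e = v).card = 1 := by omega
          obtain ⟨y, hy⟩ := Finset.card_eq_one.mp hO1'
          have hsy : s y = v := (hmo y).mp (hy ▸ Finset.mem_singleton_self y)
          have huy : ∀ e, s e = v → e = y := by
            intro e he
            have h := (hmo e).mpr he
            rw [hy, Finset.mem_singleton] at h; exact h
          obtain ⟨x1, hx1, x2, hx2, h12⟩ := Finset.one_lt_card.mp
            (by omega : 1 < (Finset.univ.filter fun e => t e = v).card)
          have ht1 : t x1 = v := (hmi x1).mp hx1
          have ht2 : t x2 = v := (hmi x2).mp hx2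
          have hiff := hge y x1 x2 h12 (by rw [ht1, hsy]) (by rw [ht2, hsy])
          have hFieq : (Finset.univ.filter fun e => t e = v) = {x1, x2} := by
            symm
            apply Finset.eq_of_subset_of_card_le
            · intro w hw
              rcases Finset.mem_insert.mp hw with rfl | hw'
              · exact hx1
              · rw [Finset.mem_singleton] at hw'; subst hw'; exact hx2
            · rw [Finset.card_insert_of_notMem (by simp [h12]), Finset.card_singleton]
              omega
          have hmemD : ∀ z, z ∈ D v ↔ (z = x1 ∧ R x1 y) ∨ (z = x2 ∧ R x2 y) := by
            intro z
            rw [hDmem v z]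
            constructor
            · rintro ⟨hz, hrz⟩
              have hzFi : z ∈ (Finset.univ.filter fun e => t e = v) := (hmi z).mpr hz
              rw [hFieq] at hzFi
              rcases Finset.mem_insert.mp hzFi with rfl | hz'
              · exact Or.inl ⟨rfl, hrz y hsy⟩
              · rw [Finset.mem_singleton] at hz'; subst hz'
                exact Or.inr ⟨rfl, hrz y hsy⟩
            · rintro (⟨rfl, hr⟩ | ⟨rfl, hr⟩)
              · exact ⟨ht1, fun e he => (huy e he) ▸ hr⟩
              · exact ⟨ht2, fun e he => (huy e he) ▸ hr⟩
          have hDcard : (D v).card = 1 := by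
            by_cases hr1 : R x1 y
            · have hDe : D v = {x1} := by
                ext z
                rw [hmemD z, Finset.mem_singleton]
                constructor
                · rintro (⟨rfl, _⟩ | ⟨rfl, hr⟩)
                  · rfl
                  · exact absurd hr (hiff.mp hr1)
                · rintro rfl; exact Or.inl ⟨rfl, hr1⟩
              rw [hDe, Finset.card_singleton]
            · have hr2 : R x2 y := by
                by_contra h2
                exact hr1 (hiff.mpr h2)
              have hDe : D v = {x2} := by
                ext z
                rw [hmemD z, Finset.mem_singleton]
                constructor
                · rintro (⟨rfl, hr⟩ | ⟨rfl, _⟩)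
                  · exact absurd hr hr1
                  · rfl
                · rintro rfl; exact Or.inr ⟨rfl, hr2⟩
              rw [hDe, Finset.card_singleton]
          omega
      · have hO1 : (Finset.univ.filter fun e => s e = v).card ≤ 1 := by omega
        have hI1 : (Finset.univ.filter fun e => t e = v).card ≤ 1 := by omega
        by_cases hI0 : (Finset.univ.filter fun e => t e = v).card = 0
        · have hni : ∀ e : E, t e ≠ v := by
            intro e he
            have h := (hmi e).mpr he
            rw [Finset.card_eq_zero.mp hI0] at h
            exact absurd h (Finset.notMem_empty e)
          have hD0 : D v = ∅ := by
            rw [Finset.eq_empty_iff_forall_notMem]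
            intro x hx
            exact hni x ((hDmem v x).mp hx).1
          by_cases hO0 : (Finset.univ.filter fun e => s e = v).card = 0
          · have hno : ∀ e : E, s e ≠ v := by
              intro e he
              have h := (hmo e).mpr he
              rw [Finset.card_eq_zero.mp hO0] at h
              exact absurd h (Finset.notMem_empty e)
            rw [hD0, Finset.card_empty, ha2 v hno hni, hO0]
          · have hO1' : (Finset.univ.filter fun e => s e = v).card = 1 := by omega
            obtain ⟨y, hy⟩ := Finset.card_eq_one.mp hO1'
            have hsy : s y = v := (hmo y).mp (hy ▸ Finset.mem_singleton_self y)
            have ha : a v = 1 :=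
              ha1 v hO1 hI1 (Or.inl ⟨y, hsy⟩) (fun x' y' hx' _ => absurd hx' (hni x'))
            rw [hD0, Finset.card_empty, ha, hO1']
        · have hI1' : (Finset.univ.filter fun e => t e = v).card = 1 := by omega
          obtain ⟨x, hx⟩ := Finset.card_eq_one.mp hI1'
          have htx : t x = v := (hmi x).mp (hx ▸ Finset.mem_singleton_self x)
          have hux : ∀ e, t e = v → e = x := by
            intro e he
            have h := (hmi e).mpr he
            rw [hx, Finset.mem_singleton] at h; exact h
          by_cases hO0 : (Finset.univ.filter fun e => s e = v).card = 0
          · have hno : ∀ e : E, s e ≠ v := by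
              intro e he
              have h := (hmo e).mpr he
              rw [Finset.card_eq_zero.mp hO0] at h
              exact absurd h (Finset.notMem_empty e)
            have hDeq : D v = (Finset.univ.filter fun e => t e = v) := by
              apply Finset.Subset.antisymm hDsub
              intro z hz
              exact (hDmem v z).mpr ⟨(hmi z).mp hz, fun e he => absurd he (hno e)⟩
            have ha : a v = 1 :=
              ha1 v hO1 hI1 (Or.inr ⟨x, htx⟩) (fun x' y' _ hy' => absurd hy' (hno y'))
            rw [hDeq, hI1', ha, hO0]
          · have hO1' : (Finset.univ.filter fun e => s e = v).card = 1 := by omega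
            obtain ⟨y, hy⟩ := Finset.card_eq_one.mp hO1'
            have hsy : s y = v := (hmo y).mp (hy ▸ Finset.mem_singleton_self y)
            have huy : ∀ e, s e = v → e = y := by
              intro e he
              have h := (hmo e).mpr he
              rw [hy, Finset.mem_singleton] at h; exact h
            by_cases hrxy : R x y
            · have ha : a v = 0 := ha0' v x y htx hsy hux huy hrxy
              have hDeq : D v = {x} := by
                ext z
                rw [hDmem v z, Finset.mem_singleton]
                constructor
                · rintro ⟨hz, _⟩; exact hux z hz
                · rintro rfl; exact ⟨htx, fun e he => (huy e he) ▸ hrxy⟩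
              rw [hDeq, Finset.card_singleton, ha, hO1']
            · have ha : a v = 1 := ha1 v hO1 hI1 (Or.inl ⟨y, hsy⟩)
                (fun x' y' hx' hy' => by rw [hux x' hx', huy y' hy']; exact hrxy)
              have hD0 : D v = ∅ := by
                rw [Finset.eq_empty_iff_forall_notMem]
                intro z hz
                obtain ⟨hz1, hz2⟩ := (hDmem v z).mp hz
                have hr := hz2 y hsy
                rw [hux z hz1] at hr
                exact hrxy hr
              rw [hD0, Finset.card_empty, ha, hO1']
  refine ⟨key, ?_⟩
  intro θ hθL hθC hθ0
  have hza : ∀ v : V, θ v * (a v : ℝ) = 0 := by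
    intro v
    by_cases h1 : (Finset.univ.filter fun e => s e = v).card ≤ 1
    · by_cases h2 : (Finset.univ.filter fun e => t e = v).card ≤ 1
      · rw [hθ0 v h1 h2, zero_mul]
      · rw [ha0 v (Or.inr (by omega))]; simp
    · rw [ha0 v (Or.inl (by omega))]; simp
  have hv : ∀ v : V, (2:ℝ) * θ v
      = (∑ l ∈ Lines, θ v * (lineVisits s t l v : ℝ))
        + (∑ l ∈ Circs, θ v * (cycVisits s l v : ℝ)) + θ v * (a v : ℝ) := by
    intro v
    have hk' : (∑ l ∈ Lines, (lineVisits s t l v : ℝ))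
        + (∑ l ∈ Circs, (cycVisits s l v : ℝ)) + (a v : ℝ) = 2 := by
      exact_mod_cast key v
    rw [← Finset.mul_sum, ← Finset.mul_sum]
    linear_combination (-θ v) * hk'
  have hmain : (2:ℝ) * ∑ v : V, θ v = 0 := by
    calc (2:ℝ) * ∑ v : V, θ v
        = ∑ v : V, ((∑ l ∈ Lines, θ v * (lineVisits s t l v : ℝ))
            + (∑ l ∈ Circs, θ v * (cycVisits s l v : ℝ)) + θ v * (a v : ℝ)) := by
          rw [Finset.mul_sum]
          exact Finset.sum_congr rfl fun v _ => hv v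
      _ = (∑ v : V, ∑ l ∈ Lines, θ v * (lineVisits s t l v : ℝ))
            + (∑ v : V, ∑ l ∈ Circs, θ v * (cycVisits s l v : ℝ))
            + ∑ v : V, θ v * (a v : ℝ) := by
          rw [Finset.sum_add_distrib, Finset.sum_add_distrib]
      _ = 0 := by
          have h1 : (∑ v : V, ∑ l ∈ Lines, θ v * (lineVisits s t l v : ℝ)) = 0 := by
            rw [Finset.sum_comm]
            exact Finset.sum_eq_zero fun l hl => hθL l hl
          have h2 : (∑ v : V, ∑ l ∈ Circs, θ v * (cycVisits s l v : ℝ)) = 0 := by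
            rw [Finset.sum_comm]
            exact Finset.sum_eq_zero fun l hl => hθC l hl
          have h3 : (∑ v : V, θ v * (a v : ℝ)) = 0 :=
            Finset.sum_eq_zero fun v _ => hza v
          rw [h1, h2, h3, add_zero, add_zero]
  linarith
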